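/- Let M be a loopless matroid on ground set E, and let F ∈ N(M) (a nonempty flag of nonempty flats of M, ordered by inclusion, with largest element possibly E). Suppose E ∈ F. Then M_F = ⊕_{F ∈ F} M|F / z_F(F), where z_F(F) is the largest element of F strictly below F (or the empty flat if none exists), and M_F is the common initial matroid M_w for w in the relative interior of the cone σ_F spanned by the indicator vectors v_F, F ∈ F. -/

import Mathlib

open Polynomial

namespace MatroidZeta

open scoped Classical

variable {α : Type*}

/-- The `q`-analogue `[n]_q = 1 + q + ⋯ + q^(n-1)` of a natural number `n`, in `ℤ[q]`. -/
noncomputable def qAnalogue (n : ℕ) : Polynomial ℤ := ∑ i ∈ Finset.range n, X ^ i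

/-- The rank of a set `X` in a matroid `M`: the largest size of an independent subset of `X`. -/
noncomputable def rk (M : Matroid α) (X : Set α) : ℕ :=
  sSup {n | ∃ I, M.Indep I ∧ I ⊆ X ∧ I.ncard = n}

/-- Contraction `M / C` of a matroid, defined as the dual of the deletion of `C`
from the dual matroid. -/
noncomputable def contract (M : Matroid α) (C : Set α) : Matroid α :=
  ((M✶.restrict (M✶.E \ C))✶)

/-- A matroid is loopless if no element of the ground set lies in the closure of `∅`. -/
def Loopless (M : Matroid α) : Prop := M.closure ∅ = ∅

/-- The characteristic polynomial `χ_M(q) = ∑_{S ⊆ E} (-1)^{#S} q^(rk M - rk S)`. -/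
noncomputable def charPoly (M : Matroid α) : Polynomial ℤ :=
  ∑ᶠ S ∈ {S : Set α | S ⊆ M.E}, (-1 : ℤ) ^ S.ncard • (X : Polynomial ℤ) ^ (rk M M.E - rk M S)

/-- The reduced characteristic polynomial
`χ̄_M(q) = χ_M(q)/(q-1) = ∑_{S ⊆ E} (-1)^{#S} [rk M - rk S]_q`. -/
noncomputable def redCharPoly (M : Matroid α) : Polynomial ℤ :=
  ∑ᶠ S ∈ {S : Set α | S ⊆ M.E}, (-1 : ℤ) ^ S.ncard • qAnalogue (rk M M.E - rk M S)

/-- `wt_M(w) = max_{B basis of M} ∑_{e ∈ B} w e`. -/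
noncomputable def wt (M : Matroid α) (w : α → ℝ) : ℝ :=
  sSup {x | ∃ B, M.IsBase B ∧ x = ∑ᶠ e ∈ B, w e}

/-- The initial matroid `M_w`: the matroid on the ground set of `M` whose bases are the
bases of `M` of maximal `w`-weight.  (Such a matroid exists and is unique.) -/
noncomputable def initialMatroid (M : Matroid α) (w : α → ℝ) : Matroid α :=
  if h : ∃ N : Matroid α, N.E = M.E ∧
      ∀ B, N.IsBase B ↔ M.IsBase B ∧ ∑ᶠ e ∈ B, w e = wt M w
  then h.choose else M

/-- A flag of non-minimal flats of `M`: a chain of flats strictly above `cl(∅)`. -/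
def IsFlag (M : Matroid α) (C : Finset (Set α)) : Prop :=
  (∀ F ∈ C, M.IsFlat F ∧ M.closure ∅ ⊂ F) ∧ IsChain (· ⊆ ·) (C : Set (Set α))

/-- `N(M)`: the set of flags of non-minimal flats of `M`. -/
def flags (M : Matroid α) : Set (Finset (Set α)) := {C | IsFlag M C}

/-- `N°(M)`: flags not containing the ground set. -/
def flagsCirc (M : Matroid α) : Set (Finset (Set α)) := {C | IsFlag M C ∧ M.E ∉ C}

/-- `N*(M)`: flags containing the ground set. -/
def flagsStar (M : Matroid α) : Set (Finset (Set α)) := {C | IsFlag M C ∧ M.E ∈ C}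

/-- `z_C(F)`: the largest member of the chain `C` strictly below `F` (or `∅` if none). -/
def zmin (C : Finset (Set α)) (F : Set α) : Set α := ⋃₀ {G | G ∈ C ∧ G ⊂ F}

/-- The weight vector `∑_{F ∈ C} v_F`, a point in the relative interior of the cone `σ_C`. -/
noncomputable def flagWeight (C : Finset (Set α)) : α → ℝ :=
  fun e => ∑ F ∈ C, if e ∈ F then (1 : ℝ) else 0

/-- The initial matroid `M_C` of a flag `C`. -/
noncomputable def flagMatroid (M : Matroid α) (C : Finset (Set α)) : Matroid α :=
  initialMatroid M (flagWeight C)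



open Set Matroid

lemma contract_ground' (M : Matroid α) (C : Set α) : (contract M C).E = M.E \ C := rfl

lemma contract_base_aux {M : Matroid α} {C J : Set α} :
    (contract M C).IsBase J ↔ J ⊆ M.E \ C ∧ M✶.IsBasis' ((M.E \ C) \ J) (M.E \ C) := by
  rw [contract, Matroid.dual_isBase_iff', Matroid.isBase_restrict_iff',
    Matroid.restrict_ground_eq, Matroid.dual_ground]
  tauto

lemma ncard_le_of_indep_basis {M : Matroid α} (hfin : M.E.Finite) {S I X : Set α}
    (hS : M.Indep S) (hSX : S ⊆ X) (hI : M.IsBasis I X) : S.ncard ≤ I.ncard := by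
  by_contra hlt
  push_neg at hlt
  have hSfin : S.Finite := hfin.subset hS.subset_ground
  have hIfin : I.Finite := hfin.subset hI.indep.subset_ground
  have henc : I.encard < S.encard := by
    rw [← hIfin.cast_ncard_eq, ← hSfin.cast_ncard_eq]
    exact_mod_cast hlt
  obtain ⟨e, he, hins⟩ := hI.indep.augment hS henc
  have heq := hI.eq_of_subset_indep hins (subset_insert _ _)
    (insert_subset (hSX he.1) hI.subset)
  exact he.2 (by rw [heq]; exact mem_insert _ _)

lemma contract_base_iff {M : Matroid α} {C I J : Set α} (hfin : M.E.Finite)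
    (hI : M.IsBasis I C) (hJ : J ⊆ M.E \ C) :
    (contract M C).IsBase J ↔ M.IsBase (J ∪ I) := by
  have hCE : C ⊆ M.E := hI.subset_ground
  have hIC : I ⊆ C := hI.subset
  have hJC : Disjoint J C := disjoint_left.mpr fun x hx => (hJ hx).2
  constructor
  · intro hbase
    obtain ⟨-, hb⟩ := contract_base_aux.mp hbase
    have hK : M✶.IsBasis ((M.E \ C) \ J) (M.E \ C) :=
      (Matroid.isBasis'_iff_isBasis diff_subset).mp hb
    set K := (M.E \ C) \ J with hKdef
    obtain ⟨-, B, hB, hdisjKB⟩ := Matroid.dual_indep_iff_exists'.mp hK.indep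
    have hBCJ : B ⊆ C ∪ J := by
      intro b hbB
      by_contra hb'
      exact (disjoint_left.mp hdisjKB
        ⟨⟨hB.subset_ground hbB, fun h => hb' (Or.inl h)⟩,
          fun h => hb' (Or.inr h)⟩) hbB
    obtain ⟨B₁, hB₁, hIB₁, hB₁sub⟩ := hI.indep.exists_isBase_subset_union_isBase hB
    have hB₁CJ : B₁ ⊆ C ∪ J :=
      hB₁sub.trans (union_subset (hIC.trans subset_union_left) hBCJ)
    have hB₁C : I = B₁ ∩ C :=
      hI.eq_of_subset_indep (hB₁.indep.inter_right C)
        (subset_inter hIB₁ hIC) inter_subset_right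
    have hdisjKB₁ : Disjoint K B₁ := by
      rw [disjoint_left]
      intro x hxK hxB₁
      rcases hB₁CJ hxB₁ with h | h
      · exact hxK.1.2 h
      · exact hxK.2 h
    have hJB₁ : J ⊆ B₁ := by
      intro x hxJ
      by_contra hxB₁
      have hxD : x ∈ M.E \ C := hJ hxJ
      have hind : M✶.Indep (insert x K) := by
        rw [Matroid.dual_indep_iff_exists']
        refine ⟨insert_subset hxD.1 (diff_subset.trans diff_subset), B₁, hB₁, ?_⟩
        refine disjoint_left.mpr ?_
        intro y hy hyB₁
        rcases mem_insert_iff.mp hy with rfl | hy'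
        · exact hxB₁ hyB₁
        · exact disjoint_left.mp hdisjKB₁ hy' hyB₁
      have heq := hK.eq_of_subset_indep hind (subset_insert _ _)
        (insert_subset hxD diff_subset)
      have hxK : x ∈ K := by rw [heq]; exact mem_insert _ _
      exact hxK.2 hxJ
    have hB₁eq : B₁ = J ∪ I := by
      apply subset_antisymm
      · intro b hb
        rcases hB₁CJ hb with h | h
        · exact Or.inr (hB₁C ▸ ⟨hb, h⟩)
        · exact Or.inl h
      · exact union_subset hJB₁ hIB₁
    rwa [← hB₁eq]
  · intro hbase
    rw [contract_base_aux]
    refine ⟨hJ, (Matroid.isBasis'_iff_isBasis diff_subset).mpr ?_⟩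
    set K := (M.E \ C) \ J with hKdef
    have hKE : K ⊆ M.E := diff_subset.trans diff_subset
    have hKind : M✶.Indep K := by
      rw [Matroid.dual_indep_iff_exists']
      refine ⟨hKE, J ∪ I, hbase, ?_⟩
      rw [disjoint_union_right]
      exact ⟨disjoint_sdiff_left,
        (disjoint_left.mpr fun x hx => hx.1.2).mono_right hIC⟩
    refine hKind.isBasis_of_maximal_subset diff_subset ?_ ?_
    · intro K' hK' hKK' hK'D
      intro x hxK'
      refine ⟨hK'D hxK', fun hxJ => ?_⟩
      obtain ⟨-, B', hB', hdisj'⟩ := Matroid.dual_indep_iff_exists'.mp hK'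
      have hxB' : x ∉ B' := fun h => disjoint_left.mp hdisj' hxK' h
      have hB'sub : B' ⊆ C ∪ (J \ {x}) := by
        intro b hbB'
        have hbE : b ∈ M.E := hB'.subset_ground hbB'
        have hbK' : b ∉ K' := fun h => disjoint_left.mp hdisj' h hbB'
        by_cases hbC : b ∈ C
        · exact Or.inl hbC
        · have hbJ : b ∈ J := by
            by_contra hbJ
            exact hbK' (hKK' ⟨⟨hbE, hbC⟩, hbJ⟩)
          exact Or.inr ⟨hbJ, fun h => hxB' (h ▸ hbB')⟩
      have hJfin : J.Finite := hfin.subset (hJ.trans diff_subset)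
      have hIfin : I.Finite := hfin.subset (hIC.trans hCE)
      have hB'fin : B'.Finite := hfin.subset hB'.subset_ground
      have hCfin : C.Finite := hfin.subset hCE
      have hcard : B'.ncard = J.ncard + I.ncard := by
        rw [hB'.ncard_eq_ncard_of_isBase hbase,
          ncard_union_eq (hJC.mono_right hIC) hJfin hIfin]
      have h1 : (B' ∩ C).ncard ≤ I.ncard :=
        ncard_le_of_indep_basis hfin (hB'.indep.inter_right C) inter_subset_right hI
      have h2 : B'.ncard ≤ (B' ∩ C).ncard + (J \ {x}).ncard := by
        have : B' ⊆ (B' ∩ C) ∪ (J \ {x}) := by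
          intro b hb
          rcases hB'sub hb with h | h
          · exact Or.inl ⟨hb, h⟩
          · exact Or.inr h
        exact le_trans (ncard_le_ncard this ((hB'fin.inter_of_left C).union
          hJfin.diff)) (ncard_union_le _ _)
      have h3 : (J \ {x}).ncard = J.ncard - 1 :=
        ncard_diff_singleton_of_mem hxJ
      have h4 : 1 ≤ J.ncard := by
        rw [Nat.one_le_iff_ne_zero, Ne, ncard_eq_zero hJfin]
        exact fun h => (h ▸ hxJ : x ∈ (∅ : Set α))
      omega
    · exact diff_subset

lemma rk_eq_ncard_basis {M : Matroid α} (hfin : M.E.Finite) {I X : Set α} (hI : M.IsBasis I X) :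
    rk M X = I.ncard := by
  have hub : ∀ n ∈ {n | ∃ J, M.Indep J ∧ J ⊆ X ∧ J.ncard = n}, n ≤ I.ncard := by
    rintro n ⟨J, hJ, hJX, rfl⟩
    exact ncard_le_of_indep_basis hfin hJ hJX hI
  have hmem : I.ncard ∈ {n | ∃ J, M.Indep J ∧ J ⊆ X ∧ J.ncard = n} :=
    ⟨I, hI.indep, hI.subset, rfl⟩
  exact le_antisymm (csSup_le ⟨_, hmem⟩ hub) (le_csSup ⟨_, hub⟩ hmem)

lemma zmin_cases {M : Matroid α} {C : Finset (Set α)} (hC : IsFlag M C) (F : Set α) :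
    zmin C F = ∅ ∨ (zmin C F ∈ C ∧ zmin C F ⊂ F ∧
      ∀ G ∈ C, G ⊂ F → G ⊆ zmin C F) := by
  by_cases hne : {G | G ∈ C ∧ G ⊂ F}.Nonempty
  · right
    have hfin : {G | G ∈ C ∧ G ⊂ F}.Finite :=
      (C.finite_toSet).subset fun G hG => hG.1
    obtain ⟨G₀, hG₀, hmax⟩ := Set.Finite.exists_maximalFor id _ hfin hne
    have hgreat : ∀ G ∈ C, G ⊂ F → G ⊆ G₀ := by
      intro G hG hGF
      rcases eq_or_ne G G₀ with rfl | hne'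
      · exact Subset.rfl
      · rcases hC.2 hG hG₀.1 hne' with h | h
        · exact h
        · exact hmax ⟨hG, hGF⟩ h
    have hz : zmin C F = G₀ := by
      apply subset_antisymm
      · exact sUnion_subset fun G hG => hgreat G hG.1 hG.2
      · exact subset_sUnion_of_mem hG₀
    rw [hz]
    exact ⟨hG₀.1, hG₀.2, hgreat⟩
  · left
    rw [Set.not_nonempty_iff_eq_empty] at hne
    rw [zmin, hne, sUnion_empty]

theorem flagMatroid_eq_disjointSigma (M : Matroid α) (hE : M.E.Finite)
    (hM : Loopless M) {C : Finset (Set α)} (hC : IsFlag M C) (hEC : M.E ∈ C)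
    (hdis : Pairwise (Function.onFun Disjoint fun F : {F // F ∈ C} =>
      (contract (M.restrict F.1) (zmin C F.1)).E)) :
    flagMatroid M C = Matroid.disjointSigma
      (fun F : {F // F ∈ C} => contract (M.restrict F.1) (zmin C F.1)) hdis := by
  classical
  set NN := Matroid.disjointSigma
      (fun F : {F // F ∈ C} => contract (M.restrict F.1) (zmin C F.1)) hdis with hNN
  have hFE : ∀ F ∈ C, F ⊆ M.E := fun F hF => ((hC.1 F hF).1).subset_ground
  have hrfin : ∀ F ∈ C, (M ↾ F).E.Finite := by
    intro F hF; rw [restrict_ground_eq]; exact hE.subset (hFE F hF)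
  have hground : ∀ F : {F // F ∈ C},
      (contract (M.restrict F.1) (zmin C F.1)).E = F.1 \ zmin C F.1 := by
    intro F; rw [contract_ground', restrict_ground_eq]
  have hNNE : NN.E = M.E := by
    rw [hNN, Matroid.disjointSigma_ground_eq]
    apply subset_antisymm
    · apply iUnion_subset
      intro F
      rw [hground]
      exact diff_subset.trans (hFE F.1 F.2)
    · intro e he
      have hne : {F | F ∈ C ∧ e ∈ F}.Nonempty := ⟨M.E, hEC, he⟩
      have hfin : {F | F ∈ C ∧ e ∈ F}.Finite :=
        C.finite_toSet.subset fun F hF => hF.1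
      obtain ⟨F₀, hF₀, hmin⟩ := Set.Finite.exists_minimalFor id _ hfin hne
      refine mem_iUnion.mpr ⟨⟨F₀, hF₀.1⟩, ?_⟩
      rw [hground]
      refine ⟨hF₀.2, fun hez => ?_⟩
      obtain ⟨G, hG, heG⟩ := hez
      exact not_subset_of_ssubset hG.2 (hmin ⟨hG.1, heG⟩ hG.2.subset)
  -- Forward: components bases ⇒ every B ∩ F is a basis of F
  have keyA : ∀ B : Set α,
      (∀ F : {F // F ∈ C},
        (contract (M.restrict F.1) (zmin C F.1)).IsBase (B ∩ (F.1 \ zmin C F.1))) →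
      ∀ F ∈ C, M.IsBasis (B ∩ F) F := by
    intro B hB
    have main : ∀ n : ℕ, ∀ F, ∀ hF : F ∈ C,
        (C.filter (fun G => G ⊂ F)).card ≤ n → M.IsBasis (B ∩ F) F := by
      intro n
      induction n with
      | zero =>
        intro F hF hcard
        rcases zmin_cases hC F with hz | ⟨hzC, hzF, -⟩
        · have hb := hB ⟨F, hF⟩
          rw [hz] at hb
          have hbase := (contract_base_iff (hrfin F hF)
            ((M ↾ F).empty_indep.isBasis_self)
            (by rw [restrict_ground_eq, diff_empty]; exact inter_subset_right)).mp hb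
          rw [diff_empty, union_empty] at hbase
          exact (Matroid.isBase_restrict_iff (hFE F hF)).mp hbase
        · exfalso
          have hmem : zmin C F ∈ C.filter (fun G => G ⊂ F) :=
            Finset.mem_filter.mpr ⟨hzC, hzF⟩
          have := Finset.card_pos.mpr ⟨_, hmem⟩
          omega
      | succ n ih =>
        intro F hF hcard
        rcases zmin_cases hC F with hz | ⟨hzC, hzF, -⟩
        · have hb := hB ⟨F, hF⟩
          rw [hz] at hb
          have hbase := (contract_base_iff (hrfin F hF)
            ((M ↾ F).empty_indep.isBasis_self)
            (by rw [restrict_ground_eq, diff_empty]; exact inter_subset_right)).mp hb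
          rw [diff_empty, union_empty] at hbase
          exact (Matroid.isBase_restrict_iff (hFE F hF)).mp hbase
        · set G₀ := zmin C F with hG₀
          have hmem : G₀ ∈ C.filter (fun G => G ⊂ F) :=
            Finset.mem_filter.mpr ⟨hzC, hzF⟩
          have hsubfil : C.filter (fun G => G ⊂ G₀) ⊆
              (C.filter (fun G => G ⊂ F)).erase G₀ := by
            intro G hG
            rw [Finset.mem_filter] at hG
            refine Finset.mem_erase.mpr ⟨fun h => (h ▸ hG.2).ne rfl, ?_⟩
            exact Finset.mem_filter.mpr ⟨hG.1, hG.2.trans hzF⟩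
          have hcard' : (C.filter (fun G => G ⊂ G₀)).card ≤ n := by
            have h1 := Finset.card_le_card hsubfil
            rw [Finset.card_erase_of_mem hmem] at h1
            have h2 := Finset.card_pos.mpr ⟨_, hmem⟩
            omega
          have hIH : M.IsBasis (B ∩ G₀) G₀ := ih G₀ hzC hcard'
          have hIHr : (M ↾ F).IsBasis (B ∩ G₀) G₀ :=
            (Matroid.isBasis_restrict_iff (hFE F hF)).mpr ⟨hIH, hzF.subset⟩
          have hb := hB ⟨F, hF⟩
          rw [← hG₀] at hb
          have hbase := (contract_base_iff (hrfin F hF) hIHr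
            (by rw [restrict_ground_eq]; exact inter_subset_right)).mp hb
          rw [← inter_union_distrib_left, diff_union_of_subset hzF.subset] at hbase
          exact (Matroid.isBase_restrict_iff (hFE F hF)).mp hbase
    intro F hF
    exact main (C.filter (fun G => G ⊂ F)).card F hF le_rfl
  -- Converse
  have keyB : ∀ B : Set α, (∀ F ∈ C, M.IsBasis (B ∩ F) F) →
      ∀ F : {F // F ∈ C},
        (contract (M.restrict F.1) (zmin C F.1)).IsBase (B ∩ (F.1 \ zmin C F.1)) := by
    intro B hB F
    obtain ⟨F, hF⟩ := F
    rcases zmin_cases hC F with hz | ⟨hzC, hzF, -⟩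
    · rw [hz]
      refine (contract_base_iff (hrfin F hF) ((M ↾ F).empty_indep.isBasis_self)
        (by rw [restrict_ground_eq, diff_empty]; exact inter_subset_right)).mpr ?_
      rw [diff_empty, union_empty]
      exact (Matroid.isBase_restrict_iff (hFE F hF)).mpr (hB F hF)
    · set G₀ := zmin C F with hG₀
      have hIHr : (M ↾ F).IsBasis (B ∩ G₀) G₀ :=
        (Matroid.isBasis_restrict_iff (hFE F hF)).mpr ⟨hB G₀ hzC, hzF.subset⟩
      refine (contract_base_iff (hrfin F hF) hIHr
        (by rw [restrict_ground_eq]; exact inter_subset_right)).mpr ?_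
      rw [← inter_union_distrib_left, diff_union_of_subset hzF.subset]
      exact (Matroid.isBase_restrict_iff (hFE F hF)).mpr (hB F hF)
  -- weight computation
  have hweight : ∀ B : Set α, B ⊆ M.E →
      (∑ᶠ e ∈ B, flagWeight C e) = ∑ F ∈ C, ((B ∩ F).ncard : ℝ) := by
    intro B hBE
    have hBfin : B.Finite := hE.subset hBE
    rw [← hBfin.coe_toFinset, finsum_mem_coe_finset]
    simp only [flagWeight]
    rw [Finset.sum_comm]
    apply Finset.sum_congr rfl
    intro F hF
    rw [Finset.sum_boole]
    have h2 : (↑hBfin.toFinset : Set α) ∩ F = ↑(hBfin.toFinset.filter (fun e => e ∈ F)) := by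
      ext e
      simp [Set.Finite.mem_toFinset]
    rw [h2, Set.ncard_coe_finset]
  have hrkub : ∀ B, M.IsBase B → ∀ F ∈ C, (B ∩ F).ncard ≤ rk M F := by
    intro B hB F hF
    obtain ⟨I, hI⟩ := M.exists_isBasis F (hFE F hF)
    rw [rk_eq_ncard_basis hE hI]
    exact ncard_le_of_indep_basis hE (hB.indep.inter_right F) inter_subset_right hI
  -- a base of NN
  obtain ⟨B₀, hB₀⟩ := NN.exists_isBase
  have hB₀comp : ∀ F : {F // F ∈ C},
      (contract (M.restrict F.1) (zmin C F.1)).IsBase (B₀ ∩ (F.1 \ zmin C F.1)) := by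
    intro F
    have := (Matroid.disjointSigma_isBase_iff.mp hB₀).1 F
    rwa [hground] at this
  have hB₀E : B₀ ⊆ M.E := hNNE ▸ hB₀.subset_ground
  have hB₀bas := keyA B₀ hB₀comp
  have hB₀base : M.IsBase B₀ := by
    have := hB₀bas M.E hEC
    rw [inter_eq_self_of_subset_left hB₀E] at this
    exact Matroid.isBasis_ground_iff.mp this
  have hB₀wt : (∑ᶠ e ∈ B₀, flagWeight C e) = ∑ F ∈ C, ((rk M F : ℝ)) := by
    rw [hweight B₀ hB₀E]
    apply Finset.sum_congr rfl
    intro F hF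
    rw [rk_eq_ncard_basis hE (hB₀bas F hF)]
  have hwub : ∀ x ∈ {x | ∃ B, M.IsBase B ∧ x = ∑ᶠ e ∈ B, flagWeight C e},
      x ≤ ∑ F ∈ C, ((rk M F : ℝ)) := by
    rintro x ⟨B, hB, rfl⟩
    rw [hweight B hB.subset_ground]
    apply Finset.sum_le_sum
    intro F hF
    exact_mod_cast hrkub B hB F hF
  have hwt : wt M (flagWeight C) = ∑ F ∈ C, ((rk M F : ℝ)) := by
    apply le_antisymm
    · exact csSup_le ⟨_, B₀, hB₀base, rfl⟩ hwub
    · exact le_csSup ⟨_, hwub⟩ ⟨B₀, hB₀base, hB₀wt.symm⟩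
  -- base characterization of NN
  have hNbase : ∀ B, NN.IsBase B ↔
      (M.IsBase B ∧ (∑ᶠ e ∈ B, flagWeight C e) = wt M (flagWeight C)) := by
    intro B
    constructor
    · intro h
      have hcomp : ∀ F : {F // F ∈ C},
          (contract (M.restrict F.1) (zmin C F.1)).IsBase (B ∩ (F.1 \ zmin C F.1)) := by
        intro F
        have := (Matroid.disjointSigma_isBase_iff.mp h).1 F
        rwa [hground] at this
      have hBE : B ⊆ M.E := hNNE ▸ h.subset_ground
      have hbas := keyA B hcomp
      have hBbase : M.IsBase B := by
        have := hbas M.E hEC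
        rw [inter_eq_self_of_subset_left hBE] at this
        exact Matroid.isBasis_ground_iff.mp this
      refine ⟨hBbase, ?_⟩
      rw [hweight B hBE, hwt]
      apply Finset.sum_congr rfl
      intro F hF
      rw [rk_eq_ncard_basis hE (hbas F hF)]
    · rintro ⟨hB, hw⟩
      have hsumN : ∑ F ∈ C, (B ∩ F).ncard = ∑ F ∈ C, rk M F := by
        have h1 : (∑ F ∈ C, ((B ∩ F).ncard : ℝ)) = ∑ F ∈ C, ((rk M F : ℝ)) := by
          rw [← hweight B hB.subset_ground, hw, hwt]
        exact_mod_cast h1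
      have hall : ∀ F ∈ C, (B ∩ F).ncard = rk M F :=
        (Finset.sum_eq_sum_iff_of_le (fun F hF => hrkub B hB F hF)).mp hsumN
      have hbas : ∀ F ∈ C, M.IsBasis (B ∩ F) F := by
        intro F hF
        obtain ⟨I, hI, hsubI⟩ := (hB.indep.inter_right F).subset_isBasis_of_subset
          inter_subset_right (hFE F hF)
        have heq : B ∩ F = I :=
          Set.eq_of_subset_of_ncard_le hsubI
            (by rw [← rk_eq_ncard_basis hE hI, hall F hF])
            (hE.subset hI.indep.subset_ground)
        rw [heq]
        exact hI
      rw [Matroid.disjointSigma_isBase_iff]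
      constructor
      · intro F
        rw [hground]
        exact keyB B hbas F
      · have h2 : B ⊆ NN.E := hNNE ▸ hB.subset_ground
        rwa [hNN, Matroid.disjointSigma_ground_eq] at h2
  have hex : ∃ N : Matroid α, N.E = M.E ∧
      ∀ B, N.IsBase B ↔ M.IsBase B ∧
        (∑ᶠ e ∈ B, flagWeight C e) = wt M (flagWeight C) := ⟨NN, hNNE, hNbase⟩
  rw [flagMatroid, initialMatroid, dif_pos hex]
  have hch := hex.choose_spec
  apply Matroid.ext_isBase (hch.1.trans hNNE.symm)
  intro B _
  rw [hch.2 B, hNbase B]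


end MatroidZeta
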